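/- (Theorem 1) Suppose P satisfies (1/2, b)-multiplicative expansion for some b > 1; the ground-truth classifier G* is A-separated with probability 1 − μ, i.e. R_A(G*) ≤ μ; min_{y∈{1,…,K}} P({x : G*(x) = y}) > max{2/(b−1), 2}·μ; and the constant-expansion implication of the context holds. Let Ĝ be any minimizer of R_A(G) over measurable classifiers G : X → {1,…,K} satisfying the constraint min_{y} P({x : G(x) = y}) > max{2/(b−1), 2}·R_A(G). Then Err(Ĝ) ≤ max{2/(b−1), 2}·μ. -/
import Mathlib


open MeasureTheory Set

/-- `P` satisfies `(1/2, b)`-multiplicative expansion w.r.t. the class partition `Q` and the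
neighborhood operation `Nbhd` on sets. -/
def MultiplicativeExpansion {X : Type*} [MeasurableSpace X] (P : Measure X)
    {K : ℕ} (Q : Fin K → Set X) (Nbhd : Set X → Set X) (b : ℝ) : Prop :=
  ∀ i : Fin K, ∀ S : Set X, MeasurableSet S →
    (P (S ∩ Q i)).toReal / (P (Q i)).toReal ≤ 1 / 2 →
    (P (Nbhd S ∩ Q i)).toReal / (P (Q i)).toReal ≥
      min (b * ((P (S ∩ Q i)).toReal / (P (Q i)).toReal)) 1

/-- `P` satisfies `(c, ρ)`-constant expansion w.r.t. the class partition `Q` and the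
restricted neighborhood operation `Nstar`. -/
def ConstantExpansion {X : Type*} [MeasurableSpace X] (P : Measure X)
    {K : ℕ} (Q : Fin K → Set X) (Nstar : Set X → Set X) (c ρ : ℝ) : Prop :=
  ∀ S : Set X, MeasurableSet S → (P S).toReal ≥ c →
    (∀ i : Fin K, (P (S ∩ Q i)).toReal ≤ (P (Q i)).toReal / 2) →
    (P (Nstar S \ S)).toReal ≥ min ρ (P S).toReal

/-- The consistency regularization loss `R_A(G) = P {x | ∃ x' ∈ A x, G x' ≠ G x}`. -/
noncomputable def consistencyLoss {X : Type*} [MeasurableSpace X] (P : Measure X)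
    (A : X → Set X) {K : ℕ} (G : X → Fin K) : ℝ :=
  (P {x | ∃ x' ∈ A x, G x' ≠ G x}).toReal

/-- The unsupervised error `Err(G) = min_π P {x | π (G x) ≠ G* x}`, the minimum taken over
permutations `π` of the `K` classes. -/
noncomputable def unsupErr {X : Type*} [MeasurableSpace X] (P : Measure X)
    {K : ℕ} (Gstar G : X → Fin K) : ℝ :=
  ⨅ π : Equiv.Perm (Fin K), (P {x | π (G x) ≠ Gstar x}).toReal

/-- Theorem 1: under `(1/2, b)`-multiplicative expansion (`b > 1`), `A`-separation of the
ground truth with probability `1 - μ` (i.e. `R_A(G*) ≤ μ`), the class-probability condition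
`min_y P {x | G* x = y} > max {2/(b-1), 2} * μ`, and the constant-expansion implication of
Wei et al., any minimizer `Ĝ` of `R_A` over measurable classifiers satisfying
`min_y P {x | G x = y} > max {2/(b-1), 2} * R_A(G)` has
`Err(Ĝ) ≤ max {2/(b-1), 2} * μ`. -/
theorem unsup_error_bound_of_expansion
    {X : Type*} [MeasurableSpace X] (P : Measure X) [IsProbabilityMeasure P]
    (K : ℕ) (hK : 1 ≤ K)
    (Gstar : X → Fin K) (hGstar : Measurable Gstar)
    (Q : Fin K → Set X) (hQ : ∀ i, Q i = {x | Gstar x = i})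
    (hQpos : ∀ i, 0 < P (Q i))
    (A : X → Set X) (hAmeas : ∀ x, MeasurableSet (A x))
    (N : X → Set X) (hN : ∀ x, N x = {x' | (A x ∩ A x').Nonempty})
    (Nbhd : Set X → Set X) (hNbhd : ∀ S : Set X, Nbhd S = ⋃ x ∈ S, N x)
    (Nstar : Set X → Set X)
    (hNstar : ∀ S : Set X, Nstar S = ⋃ i : Fin K, (Nbhd (S ∩ Q i) ∩ Q i))
    (hNbhdMeas : ∀ S : Set X, MeasurableSet S → MeasurableSet (Nbhd S))
    (hNstarMeas : ∀ S : Set X, MeasurableSet S → MeasurableSet (Nstar S))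
    (b : ℝ) (hb : 1 < b)
    (hexp : MultiplicativeExpansion P Q Nbhd b)
    (μ : ℝ)
    -- A-separation of the ground-truth classifier with probability 1 - μ
    (hsep : consistencyLoss P A Gstar ≤ μ)
    -- the ground-truth classes are not too small
    (hmin : ∀ y : Fin K, (P {x | Gstar x = y}).toReal > max (2 / (b - 1)) 2 * μ)
    -- the constant-expansion implication of Wei et al.
    (hWei : ∀ c ρ : ℝ, 0 < c → 0 < ρ → ∀ G : X → Fin K, Measurable G →
      ConstantExpansion P Q Nstar c ρ →
      consistencyLoss P A G < ρ →
      (∀ i : Fin K, (P {x | G x = i}).toReal > 2 * max c (consistencyLoss P A G)) →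
      ∃ π : Equiv.Perm (Fin K),
        (P {x | π (G x) ≠ Gstar x}).toReal ≤
          max c (consistencyLoss P A G) + consistencyLoss P A G)
    -- Ĝ is a minimizer of R_A over measurable classifiers satisfying the constraint
    (Ghat : X → Fin K) (hGhat : Measurable Ghat)
    (hGhatCon : ∀ y : Fin K,
      (P {x | Ghat x = y}).toReal > max (2 / (b - 1)) 2 * consistencyLoss P A Ghat)
    (hGhatMin : ∀ G : X → Fin K, Measurable G →
      (∀ y : Fin K,
        (P {x | G x = y}).toReal > max (2 / (b - 1)) 2 * consistencyLoss P A G) →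
      consistencyLoss P A Ghat ≤ consistencyLoss P A G) :
    unsupErr P Gstar Ghat ≤ max (2 / (b - 1)) 2 * μ := by

  classical
  have hb1 : (0:ℝ) < b - 1 := by linarith
  set M : ℝ := max (2 / (b - 1)) 2 with hMdef
  have hM2 : (2:ℝ) ≤ M := le_max_right _ _
  have hMb : 2 / (b - 1) ≤ M := le_max_left _ _
  have hM0 : (0:ℝ) < M := by linarith
  -- measurability of the classes
  have hQm : ∀ i, MeasurableSet (Q i) := by
    intro i
    rw [hQ]
    exact hGstar (measurableSet_singleton i)
  -- decomposition of measures over the partition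
  have hsum : ∀ T : Set X, MeasurableSet T →
      (P T).toReal = ∑ i : Fin K, (P (T ∩ Q i)).toReal := by
    intro T hT
    have hcover : T = ⋃ i, T ∩ Q i := by
      ext x
      simp only [mem_iUnion, mem_inter_iff, hQ, mem_setOf_eq]
      constructor
      · intro hx; exact ⟨Gstar x, hx, rfl⟩
      · rintro ⟨i, hx, _⟩; exact hx
    have hdisj : Pairwise (Function.onFun Disjoint fun i => T ∩ Q i) := by
      intro i j hij
      refine Set.disjoint_left.mpr ?_
      rintro x ⟨_, hxi⟩ ⟨_, hxj⟩
      rw [hQ] at hxi hxj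
      simp only [mem_setOf_eq] at hxi hxj
      exact hij (hxi.symm.trans hxj)
    have h1 : P T = ∑' i : Fin K, P (T ∩ Q i) := by
      conv_lhs => rw [hcover]
      exact measure_iUnion hdisj (fun i => hT.inter (hQm i))
    rw [h1, tsum_fintype]
    exact ENNReal.toReal_sum (fun i _ => measure_ne_top P _)
  -- constant expansion follows from multiplicative expansion
  have hCE : ∀ c : ℝ, 0 < c → ConstantExpansion P Q Nstar c ((b - 1) * c) := by
    intro c hc S hS hSc hhalf
    have hTm : MeasurableSet (Nstar S \ S) := (hNstarMeas S hS).diff hS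
    have hclass : ∀ i : Fin K,
        min (b - 1) 1 * (P (S ∩ Q i)).toReal ≤ (P ((Nstar S \ S) ∩ Q i)).toReal := by
      intro i
      set q := (P (Q i)).toReal with hqdef
      set p := (P (S ∩ Q i)).toReal with hpdef
      set d := (P ((Nstar S \ S) ∩ Q i)).toReal with hddef
      have hq : 0 < q := ENNReal.toReal_pos (hQpos i).ne' (measure_ne_top P _)
      have hp0 : 0 ≤ p := ENNReal.toReal_nonneg
      have hp : p ≤ q / 2 := hhalf i
      have hSQi : (S ∩ Q i) ∩ Q i = S ∩ Q i := by rw [inter_assoc, inter_self]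
      have hhyp : (P ((S ∩ Q i) ∩ Q i)).toReal / (P (Q i)).toReal ≤ 1 / 2 := by
        rw [hSQi, ← hpdef, ← hqdef, div_le_iff₀ hq]
        linarith
      have h1 := hexp i (S ∩ Q i) (hS.inter (hQm i)) hhyp
      rw [hSQi, ← hpdef, ← hqdef] at h1
      set t := (P (Nbhd (S ∩ Q i) ∩ Q i)).toReal with htdef
      have hsub : Nbhd (S ∩ Q i) ∩ Q i ⊆ Nstar S ∩ Q i := by
        intro x hx
        refine ⟨?_, hx.2⟩
        rw [hNstar]
        exact mem_iUnion.mpr ⟨i, hx⟩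
      have ht2 : t ≤ (P (Nstar S ∩ Q i)).toReal :=
        ENNReal.toReal_mono (measure_ne_top P _) (measure_mono hsub)
      have hmul : min (b * p) q ≤ t := by
        have h1' : min (b * (p / q)) 1 * q ≤ t / q * q :=
          mul_le_mul_of_nonneg_right h1 hq.le
        rw [div_mul_cancel₀ t hq.ne'] at h1'
        calc min (b * p) q = min (b * (p / q)) 1 * q := by
              rw [min_mul_of_nonneg _ _ hq.le, one_mul]
              congr 1
              field_simp
          _ ≤ t := h1'
      have h2 : min (b * p) q ≤ (P (Nstar S ∩ Q i)).toReal := hmul.trans ht2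
      have hsub2 : Nstar S ∩ Q i ⊆ ((Nstar S \ S) ∩ Q i) ∪ (S ∩ Q i) := by
        rintro x ⟨hx1, hx2⟩
        by_cases hxS : x ∈ S
        · exact Or.inr ⟨hxS, hx2⟩
        · exact Or.inl ⟨⟨hx1, hxS⟩, hx2⟩
      have h3 : (P (Nstar S ∩ Q i)).toReal ≤ d + p := by
        have hle : P (Nstar S ∩ Q i) ≤ P (((Nstar S \ S) ∩ Q i)) + P (S ∩ Q i) :=
          (measure_mono hsub2).trans (measure_union_le _ _)
        have := ENNReal.toReal_mono
          (by exact ENNReal.add_ne_top.mpr ⟨measure_ne_top P _, measure_ne_top P _⟩) hle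
        rwa [ENNReal.toReal_add (measure_ne_top P _) (measure_ne_top P _)] at this
      rcases le_total (b * p) q with hcase | hcase
      · rw [min_eq_left hcase] at h2
        have h4 : min (b - 1) 1 ≤ b - 1 := min_le_left _ _
        nlinarith [mul_le_mul_of_nonneg_right h4 hp0]
      · rw [min_eq_right hcase] at h2
        have h4 : min (b - 1) 1 ≤ 1 := min_le_right _ _
        nlinarith [mul_le_mul_of_nonneg_right h4 hp0]
    have hchain : min (b - 1) 1 * (P S).toReal ≤ (P (Nstar S \ S)).toReal := by
      calc min (b - 1) 1 * (P S).toReal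
          = ∑ i : Fin K, min (b - 1) 1 * (P (S ∩ Q i)).toReal := by
            rw [hsum S hS, Finset.mul_sum]
        _ ≤ ∑ i : Fin K, (P ((Nstar S \ S) ∩ Q i)).toReal :=
            Finset.sum_le_sum (fun i _ => hclass i)
        _ = (P (Nstar S \ S)).toReal := (hsum _ hTm).symm
    have hPS0 : (0:ℝ) ≤ (P S).toReal := ENNReal.toReal_nonneg
    rcases le_total (b - 1) 1 with hcase | hcase
    · rw [min_eq_left hcase] at hchain
      have : (b - 1) * c ≤ (b - 1) * (P S).toReal :=
        mul_le_mul_of_nonneg_left hSc hb1.le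
      exact le_trans (le_trans (min_le_left _ _) this) hchain
    · rw [min_eq_right hcase] at hchain
      rw [one_mul] at hchain
      exact le_trans (min_le_right _ _) hchain
  -- the minimizer beats the ground truth
  have hμ0 : (0:ℝ) ≤ μ := le_trans ENNReal.toReal_nonneg hsep
  set r := consistencyLoss P A Ghat with hrdef
  have hr0 : (0:ℝ) ≤ r := ENNReal.toReal_nonneg
  have hGstarCon : ∀ y : Fin K,
      (P {x | Gstar x = y}).toReal > M * consistencyLoss P A Gstar := by
    intro y
    have : M * consistencyLoss P A Gstar ≤ M * μ :=
      mul_le_mul_of_nonneg_left hsep hM0.le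
    exact lt_of_le_of_lt this (hmin y)
  have hrμ : r ≤ μ := (hGhatMin Gstar hGstar hGstarCon).trans hsep
  -- the minimum class probability of Ghat
  have hne : (Finset.univ : Finset (Fin K)).Nonempty := ⟨⟨0, hK⟩, Finset.mem_univ _⟩
  set m := (Finset.univ : Finset (Fin K)).inf' hne
    (fun i => (P {x | Ghat x = i}).toReal) with hmdef
  have hm : M * r < m := (Finset.lt_inf'_iff hne).mpr (fun i _ => hGhatCon i)
  have hmle : ∀ i : Fin K, m ≤ (P {x | Ghat x = i}).toReal :=
    fun i => Finset.inf'_le _ (Finset.mem_univ i)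
  -- epsilon argument
  refine le_of_forall_pos_le_add ?_
  intro ε hε
  set δ := min ε ((m - M * r) / 4) with hδdef
  have hδ0 : 0 < δ := lt_min hε (by linarith)
  have hδε : δ ≤ ε := min_le_left _ _
  have hδm : δ ≤ (m - M * r) / 4 := min_le_right _ _
  set c := r / (b - 1) + δ with hcdef
  have hc0 : 0 < c := add_pos_of_nonneg_of_pos (div_nonneg hr0 hb1.le) hδ0
  have hρ0 : 0 < (b - 1) * c := mul_pos hb1 hc0
  have hrρ : r < (b - 1) * c := by
    have : (b - 1) * c = r + (b - 1) * δ := by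
      rw [hcdef, mul_add, mul_div_cancel₀ r hb1.ne']
    rw [this]
    nlinarith
  have h2b : 2 ≤ M * (b - 1) := by
    have := (div_le_iff₀ hb1).mp hMb
    linarith
  have hcle : c ≤ M * r / 2 + δ := by
    have hdle : r / (b - 1) ≤ M * r / 2 := by
      rw [div_le_iff₀ hb1]
      nlinarith
    linarith
  have hmax : max c r ≤ M * r / 2 + δ := by
    refine max_le hcle ?_
    nlinarith
  have hcond : ∀ i : Fin K, (P {x | Ghat x = i}).toReal > 2 * max c r := by
    intro i
    have : 2 * max c r ≤ M * r + 2 * δ := by linarith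
    have h5 : M * r + 2 * δ < m := by linarith
    exact lt_of_le_of_lt this (lt_of_lt_of_le h5 (hmle i))
  obtain ⟨π, hπ⟩ := hWei c ((b - 1) * c) hc0 hρ0 Ghat hGhat (hCE c hc0) hrρ hcond
  have hbdd : BddBelow (Set.range fun π : Equiv.Perm (Fin K) =>
      (P {x | π (Ghat x) ≠ Gstar x}).toReal) := by
    refine ⟨0, ?_⟩
    rintro t ⟨π', rfl⟩
    exact ENNReal.toReal_nonneg
  have hinf : unsupErr P Gstar Ghat ≤ (P {x | π (Ghat x) ≠ Gstar x}).toReal :=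
    ciInf_le hbdd π
  have hfin : (P {x | π (Ghat x) ≠ Gstar x}).toReal ≤ M * μ + ε := by
    have h6 : max c r + r ≤ M * r + δ := by nlinarith
    have h7 : M * r ≤ M * μ := mul_le_mul_of_nonneg_left hrμ hM0.le
    calc (P {x | π (Ghat x) ≠ Gstar x}).toReal ≤ max c r + r := hπ
      _ ≤ M * r + δ := h6
      _ ≤ M * μ + ε := by linarith
  exact hinf.trans hfin
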